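/- In the setting of the Φ_ε-envelope: let θ(τ) denote the Φ_ε-envelope at τ ∈ [0,1] of a continuous bounded nonnegative function X on [0,1]. Then: (1) if τₙ → τ then θ(τₙ) → θ(τ); (2) if X(1) = 0 then θ(1) = 0; (3) for α > 0, the Φ_ε-envelope θ_α of αX satisfies θ_α(τ) → θ(τ) as α → 1. -/

import Mathlib

open MeasureTheory Set Filter Topology

/-- A continuous nonnegative solution on `[0,1]` of the backward integral equation
`u t = γ + ∫ₜ¹ (φ (u s) + ε) ds`. -/
def IsSolODE (φ : ℝ → ℝ) (ε γ : ℝ) (u : ℝ → ℝ) : Prop :=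
  ContinuousOn u (Set.Icc 0 1) ∧ (∀ t ∈ Set.Icc (0:ℝ) 1, 0 ≤ u t) ∧
    ∀ t ∈ Set.Icc (0:ℝ) 1, u t = γ + ∫ s in Set.Ioc t 1, (φ (u s) + ε)

/-- The Osgood condition `∫₀₊ dx / φ x = +∞`. -/
def OsgoodCondition (φ : ℝ → ℝ) : Prop :=
  ∀ δ > (0:ℝ), ∫⁻ x in Set.Ioc (0:ℝ) δ, ENNReal.ofReal (1 / φ x) = ⊤

/-- The Φ_ε-envelope of `X` at `τ`, relative to a family `u γ` of solutions of the
backward equation `u^γ(t) = γ + ∫ₜ¹ (Φ(u^γ(s)) + ε) ds`: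
the infimum of the values `u^γ(τ)` over those `γ ≥ 0` with `u^γ(τ) ≥ X(τ)`. -/
noncomputable def envelope (u : ℝ → ℝ → ℝ) (X : ℝ → ℝ) (τ : ℝ) : ℝ :=
  sInf {v : ℝ | ∃ γ : ℝ, 0 ≤ γ ∧ v = u γ τ ∧ X τ ≤ u γ τ}

noncomputable def fext (Φ : ℝ → ℝ) (ε : ℝ) : ℝ → ℝ := fun y => Φ (max y 0) + ε

noncomputable def Gfun (Φ : ℝ → ℝ) (ε : ℝ) : ℝ → ℝ :=
  fun y => ∫ s in (0:ℝ)..y, (fext Φ ε s)⁻¹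

variable {Φ : ℝ → ℝ} {ε : ℝ}

lemma fext_cont (hΦc : ContinuousOn Φ (Set.Ici 0)) : Continuous (fext Φ ε) := by
  have h1 : Continuous (fun y : ℝ => Φ (max y 0)) :=
    hΦc.comp_continuous (continuous_id.max continuous_const) (fun y => Set.mem_Ici.mpr (le_max_right _ _))
  exact h1.add continuous_const

lemma fext_pos (hΦnn : ∀ x ≥ (0:ℝ), 0 ≤ Φ x) (hε : 0 < ε) : ∀ y, 0 < fext Φ ε y := by
  intro y
  have := hΦnn (max y 0) (le_max_right _ _)
  unfold fext; linarith

lemma fext_eq {y : ℝ} (hy : 0 ≤ y) : fext Φ ε y = Φ y + ε := by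
  simp [fext, max_eq_left hy]

lemma Gfun_hasDerivAt (hΦc : ContinuousOn Φ (Set.Ici 0)) (hΦnn : ∀ x ≥ (0:ℝ), 0 ≤ Φ x)
    (hε : 0 < ε) (y : ℝ) : HasDerivAt (Gfun Φ ε) (fext Φ ε y)⁻¹ y := by
  have hc : Continuous (fext Φ ε)⁻¹ := by
    exact (fext_cont hΦc).inv₀ (fun x => (fext_pos hΦnn hε x).ne')
  exact intervalIntegral.integral_hasDerivAt_right (hc.intervalIntegrable 0 y)
    (hc.stronglyMeasurableAtFilter _ _) hc.continuousAt

lemma Gfun_strictMono (hΦc : ContinuousOn Φ (Set.Ici 0)) (hΦnn : ∀ x ≥ (0:ℝ), 0 ≤ Φ x)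
    (hε : 0 < ε) : StrictMono (Gfun Φ ε) := by
  apply strictMono_of_deriv_pos
  intro x
  rw [(Gfun_hasDerivAt hΦc hΦnn hε x).deriv]
  exact inv_pos.2 (fext_pos hΦnn hε x)

lemma Gfun_zero : Gfun Φ ε 0 = 0 := by simp [Gfun]

lemma Gfun_cont (hΦc : ContinuousOn Φ (Set.Ici 0)) (hΦnn : ∀ x ≥ (0:ℝ), 0 ≤ Φ x)
    (hε : 0 < ε) : Continuous (Gfun Φ ε) :=
  (Differentiable.continuous fun y => (Gfun_hasDerivAt hΦc hΦnn hε y).differentiableAt)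

lemma sol_key (hΦc : ContinuousOn Φ (Set.Ici 0)) (hΦnn : ∀ x ≥ (0:ℝ), 0 ≤ Φ x)
    (hε : 0 < ε) {γ : ℝ} {v : ℝ → ℝ} (hv : IsSolODE Φ ε γ v) :
    ∀ t ∈ Set.Icc (0:ℝ) 1, Gfun Φ ε (v t) = Gfun Φ ε γ + (1 - t) := by
  obtain ⟨hvc, hvnn, hveq⟩ := hv
  -- clamped version of v
  set cl : ℝ → ℝ := fun t => min (max t 0) 1 with hcl
  have hclmem : ∀ t, cl t ∈ Set.Icc (0:ℝ) 1 := by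
    intro t
    constructor
    · exact le_min (le_max_right _ _) zero_le_one
    · exact min_le_right _ _
  have hcleq : ∀ t ∈ Set.Icc (0:ℝ) 1, cl t = t := by
    intro t ht
    simp [hcl, max_eq_left ht.1, min_eq_left ht.2]
  have hclcont : Continuous cl := ((continuous_id.max continuous_const).min continuous_const)
  set g : ℝ → ℝ := fun s => fext Φ ε (v (cl s)) with hg
  have hgcont : Continuous g :=
    (fext_cont hΦc).comp ((hvc.comp_continuous hclcont hclmem))
  have hgpos : ∀ s, 0 < g s := fun s => fext_pos hΦnn hε _
  -- v t = γ - ∫ 1..t g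
  set w : ℝ → ℝ := fun t => γ - ∫ s in (1:ℝ)..t, g s with hw
  have hveq' : ∀ t ∈ Set.Icc (0:ℝ) 1, v t = w t := by
    intro t ht
    have h1 : ∫ s in Set.Ioc t 1, (Φ (v s) + ε) = ∫ s in Set.Ioc t 1, g s := by
      apply setIntegral_congr_fun measurableSet_Ioc
      intro s hs
      have hs' : s ∈ Set.Icc (0:ℝ) 1 := ⟨le_trans ht.1 hs.1.le, hs.2⟩
      rw [hg]
      simp only
      rw [hcleq s hs', fext_eq (hvnn s hs')]
    rw [hveq t ht, h1, hw]
    simp only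
    rw [← intervalIntegral.integral_of_le ht.2, intervalIntegral.integral_symm 1 t]
    ring
  have hwderiv : ∀ t : ℝ, HasDerivAt w (-(g t)) t := by
    intro t
    have : HasDerivAt (fun t => ∫ s in (1:ℝ)..t, g s) (g t) t :=
      intervalIntegral.integral_hasDerivAt_right (hgcont.intervalIntegrable 1 t)
        (hgcont.stronglyMeasurableAtFilter _ _) hgcont.continuousAt
    simpa using (this.const_sub γ)
  set H : ℝ → ℝ := fun t => Gfun Φ ε (w t) + t with hH
  have hHderiv : ∀ t : ℝ, HasDerivAt H ((fext Φ ε (w t))⁻¹ * (-(g t)) + 1) t := by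
    intro t
    exact (((Gfun_hasDerivAt hΦc hΦnn hε (w t)).comp t (hwderiv t)).add (hasDerivAt_id t))
  have hHzero : ∀ t ∈ Set.Icc (0:ℝ) 1, HasDerivAt H 0 t := by
    intro t ht
    have h2 : fext Φ ε (w t) = g t := by
      rw [← hveq' t ht, hg]; simp only [hcleq t ht]
    have := hHderiv t
    rw [h2] at this
    have h3 : (g t)⁻¹ * (-(g t)) + 1 = 0 := by
      have hne := (hgpos t).ne'
      field_simp
      ring
    rwa [h3] at this
  have hconst : ∀ t ∈ Set.Icc (0:ℝ) 1, H t = H 0 :=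
    constant_of_has_deriv_right_zero
      (fun t ht => ((hHderiv t).continuousAt.continuousWithinAt))
      (fun t ht => ((hHzero t (Ico_subset_Icc_self ht)).hasDerivWithinAt))
  intro t ht
  have h0 := hconst t ht
  have h1 := hconst 1 (by norm_num)
  have hw1 : w 1 = γ := by simp [hw]
  have hH1 : H 1 = Gfun Φ ε γ + 1 := by rw [hH]; simp [hw1]
  have hHt : H t = Gfun Φ ε (v t) + t := by rw [hH, hveq' t ht]
  have : Gfun Φ ε (v t) + t = Gfun Φ ε γ + 1 := by rw [← hHt, h0, ← h1, hH1]
  linarith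

lemma env_eq (hΦc : ContinuousOn Φ (Set.Ici 0)) (hΦnn : ∀ x ≥ (0:ℝ), 0 ≤ Φ x) (hε : 0 < ε)
    (u : ℝ → ℝ → ℝ) (hu : ∀ γ ≥ (0:ℝ), IsSolODE Φ ε γ (u γ))
    (Y : ℝ → ℝ) (τ : ℝ) (hτ : τ ∈ Set.Icc (0:ℝ) 1) :
    envelope u Y τ = max (Y τ) (u 0 τ) := by
  have hGm := Gfun_strictMono hΦc hΦnn hε
  have key : ∀ γ ≥ (0:ℝ), Gfun Φ ε (u γ τ) = Gfun Φ ε γ + (1 - τ) :=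
    fun γ hγ => sol_key hΦc hΦnn hε (hu γ hγ) τ hτ
  set v := max (Y τ) (u 0 τ) with hv
  have hu0nn : 0 ≤ u 0 τ := (hu 0 le_rfl).2.1 τ hτ
  have hvnn : 0 ≤ v := le_trans hu0nn (le_max_right _ _)
  have hGu0 : Gfun Φ ε (u 0 τ) = 1 - τ := by rw [key 0 le_rfl, Gfun_zero]; ring
  have hGvge : 1 - τ ≤ Gfun Φ ε v := by rw [← hGu0]; exact hGm.monotone (le_max_right _ _)
  obtain ⟨γ, hγmem, hγeq⟩ : ∃ γ ∈ Set.Icc (0:ℝ) v, Gfun Φ ε γ = Gfun Φ ε v - (1 - τ) := by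
    have hIVT := intermediate_value_Icc hvnn ((Gfun_cont hΦc hΦnn hε).continuousOn
      (s := Set.Icc 0 v))
    have hmem : Gfun Φ ε v - (1 - τ) ∈ Set.Icc (Gfun Φ ε 0) (Gfun Φ ε v) := by
      rw [Gfun_zero]
      constructor
      · linarith
      · have : (0:ℝ) ≤ 1 - τ := by linarith [hτ.2]
        linarith
    obtain ⟨γ, hγ, h⟩ := hIVT hmem
    exact ⟨γ, hγ, h⟩
  have huv : u γ τ = v := by
    apply hGm.injective
    rw [key γ hγmem.1, hγeq]; ring
  apply IsLeast.csInf_eq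
  constructor
  · exact ⟨γ, hγmem.1, huv.symm, huv ▸ le_max_left _ _⟩
  · rintro w ⟨γ', hγ', rfl, hY⟩
    have h0 : (0:ℝ) ≤ Gfun Φ ε γ' := by
      rw [← Gfun_zero (Φ := Φ) (ε := ε)]
      exact hGm.monotone hγ'
    have hle : Gfun Φ ε (u 0 τ) ≤ Gfun Φ ε (u γ' τ) := by
      rw [hGu0, key γ' hγ']; linarith
    exact max_le hY (hGm.le_iff_le.mp hle)

/-- properties of the Φ_ε-envelope `θ` of a continuous bounded
nonnegative `X`: (1) `τₙ → τ` implies `θ(τₙ) → θ(τ)`; (2) if `X(1) = 0` then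
`θ(1) = 0`; (3) the envelope `θ_α` of `αX` satisfies `θ_α(τ) → θ(τ)` as `α → 1`. -/
theorem stmt11 (Φ : ℝ → ℝ) (a b : ℝ) (ha : 0 ≤ a) (hb : 0 ≤ b)
    (hΦc : ContinuousOn Φ (Set.Ici 0)) (hΦm : MonotoneOn Φ (Set.Ici 0))
    (hΦnn : ∀ x ≥ (0:ℝ), 0 ≤ Φ x) (hΦpos : ∀ x > (0:ℝ), 0 < Φ x)
    (hΦgrow : ∀ x ≥ (0:ℝ), Φ x ≤ a * x + b) (hΦOsg : OsgoodCondition Φ)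
    (ε : ℝ) (hε : 0 < ε)
    (X : ℝ → ℝ) (C : ℝ) (hXc : ContinuousOn X (Set.Icc 0 1))
    (hXnn : ∀ t ∈ Set.Icc (0:ℝ) 1, 0 ≤ X t) (hXC : ∀ t ∈ Set.Icc (0:ℝ) 1, X t ≤ C)
    (u : ℝ → ℝ → ℝ) (hu : ∀ γ ≥ (0:ℝ), IsSolODE Φ ε γ (u γ)) :
    (∀ (τs : ℕ → ℝ) (τ : ℝ), (∀ n, τs n ∈ Set.Icc (0:ℝ) 1) → τ ∈ Set.Icc (0:ℝ) 1 →
      Filter.Tendsto τs Filter.atTop (nhds τ) →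
      Filter.Tendsto (fun n => envelope u X (τs n)) Filter.atTop (nhds (envelope u X τ))) ∧
    (X 1 = 0 → envelope u X 1 = 0) ∧
    (∀ τ ∈ Set.Icc (0:ℝ) 1,
      Filter.Tendsto (fun α : ℝ => envelope u (fun t => α * X t) τ)
        (nhdsWithin 1 (Set.Ioi 0)) (nhds (envelope u X τ))) := by
  have henv := env_eq hΦc hΦnn hε u hu
  have hu01 : u 0 1 = 0 := by
    have h := (hu 0 le_rfl).2.2 1 (by norm_num)
    simpa [Set.Ioc_self] using h
  refine ⟨?_, ?_, ?_⟩
  · intro τs τ hτs hτ htend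
    have hcont : ContinuousOn (fun t => max (X t) (u 0 t)) (Set.Icc 0 1) :=
      hXc.sup (hu 0 le_rfl).1
    have h1 : Filter.Tendsto τs Filter.atTop (nhdsWithin τ (Set.Icc 0 1)) :=
      tendsto_nhdsWithin_of_tendsto_nhds_of_eventually_within _ htend
        (Filter.Eventually.of_forall hτs)
    have h2 := ((hcont τ hτ).tendsto).comp h1
    rw [henv X τ hτ]
    exact h2.congr (fun n => (henv X (τs n) (hτs n)).symm)
  · intro hX1
    rw [henv X 1 (by norm_num), hX1, hu01]
    simp
  · intro τ hτ
    have h3 : Filter.Tendsto (fun α : ℝ => max (α * X τ) (u 0 τ)) (nhdsWithin 1 (Set.Ioi 0))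
        (nhds (max ((1:ℝ) * X τ) (u 0 τ))) :=
      (((continuous_id.mul continuous_const).max continuous_const).tendsto 1).mono_left
        nhdsWithin_le_nhds
    rw [henv X τ hτ]
    simp only [one_mul] at h3
    exact h3.congr (fun α => (henv (fun t => α * X t) τ hτ).symm)
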